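/- If a monomial ideal $Q \subseteq S$ is $P$-primary for a monomial prime ideal $P$, then its expansion $Q^*$ is a $P^*$-primary ideal of $S^*$. -/

import Mathlib

open MvPolynomial

/-- The monomial ideal of `S = K[x_1,…,x_n]` generated by the monomials `x^a`, `a ∈ A`. -/
noncomputable def monIdeal (K : Type*) [Field K] {n : ℕ} (A : Set (Fin n → ℕ)) :
    Ideal (MvPolynomial (Fin n) K) :=
  Ideal.span ((fun a => ∏ j, (X j : MvPolynomial (Fin n) K) ^ a j) '' A)

/-- The expansion `I^* = ∑_{a ∈ A} P_1^{a(1)} ⋯ P_n^{a(n)} ⊆ S^*` of the monomial ideal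
generated by the monomials `x^a`, `a ∈ A`, with respect to the tuple `(i_1,…,i_n)`;
here `P_j = (x_{j1},…,x_{j i_j})`. -/
noncomputable def expIdeal (K : Type*) [Field K] {n : ℕ} (iv : Fin n → ℕ)
    (A : Set (Fin n → ℕ)) : Ideal (MvPolynomial ((j : Fin n) × Fin (iv j)) K) :=
  ⨆ a ∈ A, ∏ j, (Ideal.span (Set.range fun k : Fin (iv j) =>
      (X ⟨j, k⟩ : MvPolynomial ((j : Fin n) × Fin (iv j)) K))) ^ a j

/-- The `K`-algebra homomorphism `π : S^* → S`, `x_{jk} ↦ x_j`. -/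
noncomputable def piHom (K : Type*) [Field K] {n : ℕ} (iv : Fin n → ℕ) :
    MvPolynomial ((j : Fin n) × Fin (iv j)) K →ₐ[K] MvPolynomial (Fin n) K :=
  aeval fun p => X p.1

open Finsupp Pointwise

namespace ExpPrimAux


variable {K : Type*} [Field K]

section Generic
variable {τ : Type*} [Fintype τ]

/-- weighted degree of an exponent vector -/
def wdeg (w : τ → ℕ) (m : τ →₀ ℕ) : ℕ := ∑ p, w p * m p

lemma wdeg_add (w : τ → ℕ) (a b : τ →₀ ℕ) : wdeg w (a + b) = wdeg w a + wdeg w b := by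
  simp [wdeg, Finsupp.add_apply, mul_add, Finset.sum_add_distrib]

/-- An injective additive embedding of exponents into a linearly ordered cancel monoid,
whose order refines comparison of `wdeg`. -/
noncomputable def Phi (w : τ → ℕ) (m : τ →₀ ℕ) : Lex (Fin (Fintype.card τ + 1) →₀ ℕ) :=
  toLex (Finsupp.equivFunOnFinite.symm
    (Fin.cons (wdeg w m) (fun i => m ((Fintype.equivFin τ).symm i))))

lemma Phi_coe (w : τ → ℕ) (m : τ →₀ ℕ) :
    ⇑(ofLex (Phi w m)) =
      (Fin.cons (wdeg w m) (fun i => m ((Fintype.equivFin τ).symm i)) : Fin _ → ℕ) := rfl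

lemma Phi_apply_zero (w : τ → ℕ) (m : τ →₀ ℕ) : ofLex (Phi w m) 0 = wdeg w m := by
  rw [Phi_coe, Fin.cons_zero]

lemma Phi_apply_succ (w : τ → ℕ) (m : τ →₀ ℕ) (i : Fin (Fintype.card τ)) :
    ofLex (Phi w m) i.succ = m ((Fintype.equivFin τ).symm i) := by
  rw [Phi_coe, Fin.cons_succ]

lemma Phi_add (w : τ → ℕ) (a b : τ →₀ ℕ) : Phi w (a + b) = Phi w a + Phi w b := by
  have : ofLex (Phi w (a + b)) = ofLex (Phi w a) + ofLex (Phi w b) := by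
    ext i
    refine Fin.cases ?_ ?_ i
    · simp [Phi_apply_zero, Finsupp.add_apply, wdeg_add]
    · intro i; simp [Phi_apply_succ, Finsupp.add_apply]
  exact congrArg toLex this

lemma Phi_injective (w : τ → ℕ) : Function.Injective (Phi w) := by
  intro a b h
  ext p
  have h2 : ofLex (Phi w a) = ofLex (Phi w b) := congrArg ofLex h
  have h3 := DFunLike.congr_fun h2 ((Fintype.equivFin τ p).succ)
  rw [Phi_apply_succ, Phi_apply_succ, Equiv.symm_apply_apply] at h3
  exact h3

lemma wdeg_le_of_Phi_le {w : τ → ℕ} {a b : τ →₀ ℕ} (h : Phi w a ≤ Phi w b) :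
    wdeg w a ≤ wdeg w b := by
  by_contra hc
  push_neg at hc
  have : Phi w b < Phi w a := by
    rw [Finsupp.Lex.lt_iff]
    exact ⟨0, fun j hj => absurd hj (Fin.not_lt_zero j), by
      rw [Phi_apply_zero, Phi_apply_zero]; exact hc⟩
  exact absurd h (not_le.mpr this)

lemma exists_Phi_min (w : τ → ℕ) (f : MvPolynomial τ K) (hf : f ≠ 0) :
    ∃ e ∈ f.support, ∀ e' ∈ f.support, Phi w e ≤ Phi w e' :=
  Finset.exists_min_image f.support (Phi w) (support_nonempty.mpr hf)

lemma coeff_min_mul {w : τ → ℕ} {f g : MvPolynomial τ K} {e d : τ →₀ ℕ}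
    (hmine : ∀ e' ∈ f.support, Phi w e ≤ Phi w e')
    (hmind : ∀ d' ∈ g.support, Phi w d ≤ Phi w d') :
    coeff (e + d) (f * g) = coeff e f * coeff d g := by
  classical
  rw [coeff_mul]
  apply Finset.sum_eq_single_of_mem (e, d) (Finset.HasAntidiagonal.mem_antidiagonal.mpr rfl)
  rintro ⟨e', d'⟩ hmem hne
  rw [Finset.HasAntidiagonal.mem_antidiagonal] at hmem
  by_contra hc
  have he' : e' ∈ f.support := MvPolynomial.mem_support_iff.mpr (left_ne_zero_of_mul hc)
  have hd' : d' ∈ g.support := MvPolynomial.mem_support_iff.mpr (right_ne_zero_of_mul hc)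
  have h1 : Phi w e ≤ Phi w e' := hmine _ he'
  have h2 : Phi w d ≤ Phi w d' := hmind _ hd'
  have hsum : Phi w e' + Phi w d' = Phi w e + Phi w d := by
    rw [← Phi_add, ← Phi_add, hmem]
  have he2 : Phi w e' = Phi w e := by
    have : Phi w e' + Phi w d ≤ Phi w e + Phi w d := by
      calc Phi w e' + Phi w d ≤ Phi w e' + Phi w d' := by gcongr
        _ = Phi w e + Phi w d := hsum
    exact le_antisymm (le_of_add_le_add_right this) h1
  have hee : e' = e := Phi_injective w he2
  subst hee
  have : d' = d := by
    have := add_left_cancel (a := e') (b := d') (c := d) hmem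
    exact this
  exact hne (by rw [this])

lemma mem_support_mul_min {w : τ → ℕ} {f g : MvPolynomial τ K} {e d : τ →₀ ℕ}
    (he : e ∈ f.support) (hd : d ∈ g.support)
    (hmine : ∀ e' ∈ f.support, Phi w e ≤ Phi w e')
    (hmind : ∀ d' ∈ g.support, Phi w d ≤ Phi w d') :
    e + d ∈ (f * g).support := by
  rw [MvPolynomial.mem_support_iff, coeff_min_mul hmine hmind]
  exact mul_ne_zero (MvPolynomial.mem_support_iff.mp he) (MvPolynomial.mem_support_iff.mp hd)

end Generic



variable {K : Type*} [Field K]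

lemma exists_le_sum {α : Type*} (g : α → ℕ) (s : Finset α) (t : ℕ) (h : t ≤ ∑ i ∈ s, g i) :
    ∃ f : α → ℕ, (∀ i, f i ≤ g i) ∧ ∑ i ∈ s, f i = t := by
  classical
  induction s using Finset.induction_on generalizing t with
  | empty =>
    simp only [Finset.sum_empty, Nat.le_zero] at h
    exact ⟨0, fun i => Nat.zero_le _, by simp [h]⟩
  | @insert a s ha ih =>
    rw [Finset.sum_insert ha] at h
    have hrest : t - min t (g a) ≤ ∑ i ∈ s, g i := by
      rcases le_total t (g a) with h' | h'
      · simp [min_eq_left h']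
      · rw [min_eq_right h']; omega
    obtain ⟨f, hf1, hf2⟩ := ih (t - min t (g a)) hrest
    refine ⟨Function.update f a (min t (g a)), fun i => ?_, ?_⟩
    · rcases eq_or_ne i a with rfl | hne
      · rw [Function.update_self]; exact min_le_right _ _
      · rw [Function.update_of_ne hne]; exact hf1 i
    · have hsum : ∑ x ∈ s, Function.update f a (min t (g a)) x = ∑ x ∈ s, f x :=
        Finset.sum_congr rfl fun i hi =>
          Function.update_of_ne (by rintro rfl; exact ha hi) _ _
      rw [Finset.sum_insert ha, Function.update_self, hsum, hf2]
      rcases le_total t (g a) with h' | h'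
      · simp [min_eq_left h']
      · rw [min_eq_right h']; omega

section Span

variable {τ : Type*}

lemma mem_span_mon {S : Set (τ →₀ ℕ)} {f : MvPolynomial τ K} :
    f ∈ Ideal.span ((fun e => (monomial e (1 : K))) '' S) ↔
      ∀ m ∈ f.support, ∃ u ∈ S, u ≤ m :=
  mem_ideal_span_monomial_image

lemma span_mon_mul (S T : Set (τ →₀ ℕ)) :
    Ideal.span ((fun e => (monomial e (1 : K))) '' S) *
      Ideal.span ((fun e => (monomial e (1 : K))) '' T) =
    Ideal.span ((fun e => (monomial e (1 : K))) '' (S + T)) := by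
  rw [Ideal.span_mul_span']
  congr 1
  ext f
  simp only [Set.mem_mul, Set.mem_image, Set.mem_add]
  constructor
  · rintro ⟨-, ⟨a, ha, rfl⟩, -, ⟨b, hb, rfl⟩, rfl⟩
    exact ⟨a + b, ⟨a, ha, b, hb, rfl⟩, by rw [monomial_mul, one_mul]⟩
  · rintro ⟨-, ⟨a, ha, b, hb, rfl⟩, rfl⟩
    exact ⟨_, ⟨a, ha, rfl⟩, _, ⟨b, hb, rfl⟩, by rw [monomial_mul, one_mul]⟩

end Span

section Sigma

variable {n : ℕ} {iv : Fin n → ℕ}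

/-- total degree of `m` in the `j`-th block of variables -/
def bdeg (m : ((j : Fin n) × Fin (iv j)) →₀ ℕ) (j : Fin n) : ℕ := ∑ k, m ⟨j, k⟩

lemma bdeg_add (a b : ((j : Fin n) × Fin (iv j)) →₀ ℕ) (j : Fin n) :
    bdeg (a + b) j = bdeg a j + bdeg b j := by
  simp [bdeg, Finsupp.add_apply, Finset.sum_add_distrib]

lemma bdeg_mono {a b : ((j : Fin n) × Fin (iv j)) →₀ ℕ} (h : a ≤ b) (j : Fin n) :
    bdeg a j ≤ bdeg b j :=
  Finset.sum_le_sum fun k _ => Finsupp.le_def.mp h _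

lemma bdeg_eq_zero_of (e : ((j : Fin n) × Fin (iv j)) →₀ ℕ) (j : Fin n)
    (h : ∀ k, e ⟨j, k⟩ = 0) : bdeg e j = 0 :=
  Finset.sum_eq_zero fun k _ => h k

lemma bdeg_single_same (j : Fin n) (k : Fin (iv j)) (c : ℕ) :
    bdeg (Finsupp.single ⟨j, k⟩ c) j = c := by
  unfold bdeg
  rw [Finset.sum_eq_single k]
  · simp
  · intro k' _ hk'
    refine Finsupp.single_eq_of_ne ?_
    simp only [ne_eq]; intro hc
    have hkk : k = k' := by simpa using hc.symm
    exact hk' hkk.symm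
  · intro h; exact absurd (Finset.mem_univ k) h

lemma bdeg_smul (c : ℕ) (u : ((j : Fin n) × Fin (iv j)) →₀ ℕ) (j : Fin n) :
    bdeg (c • u) j = c * bdeg u j := by
  simp [bdeg, Finsupp.smul_apply, Finset.mul_sum]

/-- monomials with support in block `j` and block degree exactly `c` -/
def Gexact (j : Fin n) (c : ℕ) : Set (((j : Fin n) × Fin (iv j)) →₀ ℕ) :=
  {e | (∀ p ∈ e.support, p.1 = j) ∧ bdeg e j = c}

/-- monomials with support in the blocks of `s` and block degrees given by `a` there -/
def Fset (s : Finset (Fin n)) (a : Fin n → ℕ) : Set (((j : Fin n) × Fin (iv j)) →₀ ℕ) :=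
  {e | (∀ p ∈ e.support, p.1 ∈ s) ∧ ∀ j ∈ s, bdeg e j = a j}

lemma Gexact_step (j : Fin n) (c : ℕ) :
    Gexact (iv := iv) j c + (Set.range fun k : Fin (iv j) => Finsupp.single ⟨j, k⟩ 1) =
      Gexact j (c + 1) := by
  ext e
  simp only [Set.mem_add, Set.mem_range, Gexact, Set.mem_setOf_eq]
  constructor
  · rintro ⟨x, ⟨hxs, hxd⟩, -, ⟨k, rfl⟩, rfl⟩
    refine ⟨fun p hp => ?_, ?_⟩
    · rcases Finset.mem_union.mp (Finsupp.support_add hp) with h | h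
      · exact hxs p h
      · have := Finsupp.support_single_subset h
        simp only [Finset.mem_singleton] at this
        subst this; rfl
    · rw [bdeg_add, hxd, bdeg_single_same]
  · rintro ⟨hsupp, hdeg⟩
    have hex : ∃ k, e ⟨j, k⟩ ≠ 0 := by
      by_contra h
      push_neg at h
      rw [bdeg_eq_zero_of e j h] at hdeg
      omega
    obtain ⟨k, hk⟩ := hex
    have hle : Finsupp.single (⟨j, k⟩ : (j : Fin n) × Fin (iv j)) 1 ≤ e := by
      rw [Finsupp.le_def]
      intro p
      rw [Finsupp.single_apply]
      split
      · next h => rw [← h]; omega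
      · exact Nat.zero_le _
    set u : ((j : Fin n) × Fin (iv j)) →₀ ℕ := Finsupp.single ⟨j, k⟩ 1 with hu
    have heq : e - u + u = e := tsub_add_cancel_of_le hle
    refine ⟨e - u, ⟨fun p hp => hsupp p (Finsupp.support_tsub hp), ?_⟩, u, ⟨k, rfl⟩, heq⟩
    have h2 := bdeg_add (e - u) u j
    rw [heq, hdeg] at h2
    have h3 : bdeg u j = 1 := by rw [hu]; exact bdeg_single_same j k 1
    omega

lemma span_X_block (j : Fin n) :
    Ideal.span (Set.range fun k : Fin (iv j) =>
        (X ⟨j, k⟩ : MvPolynomial ((j : Fin n) × Fin (iv j)) K)) =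
      Ideal.span ((fun e => (monomial e (1 : K))) ''
        (Set.range fun k : Fin (iv j) => Finsupp.single ⟨j, k⟩ 1)) := by
  have hX : ∀ k : Fin (iv j), (X ⟨j, k⟩ : MvPolynomial ((j : Fin n) × Fin (iv j)) K) =
      monomial (Finsupp.single ⟨j, k⟩ 1) 1 := fun k => by
    rw [← X_pow_eq_monomial, pow_one]
  have : (Set.range fun k : Fin (iv j) =>
      (X ⟨j, k⟩ : MvPolynomial ((j : Fin n) × Fin (iv j)) K)) =
      ((fun e => (monomial e (1 : K))) '' (Set.range fun k : Fin (iv j) =>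
        Finsupp.single ⟨j, k⟩ 1)) := by
    ext f
    simp only [Set.mem_range, Set.mem_image]
    constructor
    · rintro ⟨k, rfl⟩
      exact ⟨Finsupp.single ⟨j, k⟩ 1, ⟨k, rfl⟩, (hX k).symm⟩
    · rintro ⟨-, ⟨k, rfl⟩, rfl⟩
      exact ⟨k, hX k⟩
  rw [this]

lemma pow_span (j : Fin n) (c : ℕ) :
    (Ideal.span (Set.range fun k : Fin (iv j) =>
        (X ⟨j, k⟩ : MvPolynomial ((j : Fin n) × Fin (iv j)) K))) ^ c =
      Ideal.span ((fun e => (monomial e (1 : K))) '' Gexact j c) := by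
  induction c with
  | zero =>
    rw [pow_zero, Ideal.one_eq_top]
    have hG : Gexact (iv := iv) j 0 = {0} := by
      ext e
      simp only [Gexact, Set.mem_setOf_eq, Set.mem_singleton_iff]
      constructor
      · rintro ⟨hs, hd⟩
        have hsup : e.support = ∅ := by
          refine Finset.eq_empty_of_forall_notMem fun p hps => ?_
          have h1 : p.1 = j := hs p hps
          have hpe : e p ≠ 0 := Finsupp.mem_support_iff.mp hps
          obtain ⟨p1, p2⟩ := p
          cases h1
          exact hpe (Finset.sum_eq_zero_iff.mp hd p2 (Finset.mem_univ _))
        exact Finsupp.support_eq_empty.mp hsup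
      · rintro rfl
        exact ⟨fun p hp => by simp at hp, bdeg_eq_zero_of _ _ fun k => rfl⟩
    rw [hG, Set.image_singleton]
    have : (monomial (0 : ((j : Fin n) × Fin (iv j)) →₀ ℕ) (1 : K)) = 1 := by
      rw [monomial_zero']; exact C_1
    rw [this, Ideal.span_singleton_one]
  | succ c ih =>
    rw [pow_succ, ih, span_X_block, span_mon_mul, Gexact_step]

end Sigma



section Sigma2

variable {n : ℕ} {iv : Fin n → ℕ}

lemma Fset_step {j : Fin n} {s : Finset (Fin n)} (hj : j ∉ s) (a : Fin n → ℕ) :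
    Gexact (iv := iv) j (a j) + Fset s a = Fset (insert j s) a := by
  classical
  ext e
  simp only [Set.mem_add, Gexact, Fset, Set.mem_setOf_eq]
  constructor
  · rintro ⟨x, ⟨hxs, hxd⟩, y, ⟨hys, hyd⟩, rfl⟩
    refine ⟨fun p hp => ?_, fun j' hj' => ?_⟩
    · rcases Finset.mem_union.mp (Finsupp.support_add hp) with h | h
      · exact (hxs p h) ▸ Finset.mem_insert_self _ s
      · exact Finset.mem_insert_of_mem (hys p h)
    · rcases Finset.mem_insert.mp hj' with rfl | hj's
      · have hy0 : bdeg y j' = 0 := bdeg_eq_zero_of y j' fun k => by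
          by_contra hc
          exact hj (hys ⟨j', k⟩ (Finsupp.mem_support_iff.mpr hc))
        rw [bdeg_add, hxd, hy0, add_zero]
      · have hx0 : bdeg x j' = 0 := bdeg_eq_zero_of x j' fun k => by
          by_contra hc
          have := hxs ⟨j', k⟩ (Finsupp.mem_support_iff.mpr hc)
          simp only at this
          exact hj (this ▸ hj's)
        rw [bdeg_add, hx0, hyd j' hj's, zero_add]
  · rintro ⟨hsupp, hdeg⟩
    refine ⟨Finsupp.equivFunOnFinite.symm fun p => if p.1 = j then e p else 0,
      ⟨?_, ?_⟩,
      Finsupp.equivFunOnFinite.symm fun p => if p.1 = j then 0 else e p,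
      ⟨?_, ?_⟩, ?_⟩
    · intro p hp
      have : (if p.1 = j then e p else 0) ≠ 0 := Finsupp.mem_support_iff.mp hp
      by_contra hc
      rw [if_neg hc] at this
      exact this rfl
    · have : ∀ k : Fin (iv j),
          (Finsupp.equivFunOnFinite.symm fun p : (j : Fin n) × Fin (iv j) =>
            if p.1 = j then e p else 0) ⟨j, k⟩ = e ⟨j, k⟩ := fun k => if_pos rfl
      rw [bdeg, Finset.sum_congr rfl fun k _ => this k]
      exact hdeg j (Finset.mem_insert_self j s)
    · intro p hp
      have h1 : (if p.1 = j then 0 else e p) ≠ 0 := Finsupp.mem_support_iff.mp hp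
      by_cases hc : p.1 = j
      · rw [if_pos hc] at h1; exact absurd rfl h1
      · rw [if_neg hc] at h1
        rcases Finset.mem_insert.mp (hsupp p (Finsupp.mem_support_iff.mpr h1)) with h | h
        · exact absurd h hc
        · exact h
    · intro j' hj'
      have hne : j' ≠ j := fun hc => hj (hc ▸ hj')
      have : ∀ k : Fin (iv j'),
          (Finsupp.equivFunOnFinite.symm fun p : (j : Fin n) × Fin (iv j) =>
            if p.1 = j then 0 else e p) ⟨j', k⟩ = e ⟨j', k⟩ := fun k => if_neg hne
      rw [bdeg, Finset.sum_congr rfl fun k _ => this k]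
      exact hdeg j' (Finset.mem_insert_of_mem hj')
    · ext p
      simp only [Finsupp.add_apply]
      show (if p.1 = j then e p else 0) + (if p.1 = j then 0 else e p) = e p
      split <;> simp

lemma prod_span (a : Fin n → ℕ) (s : Finset (Fin n)) :
    ∏ j ∈ s, (Ideal.span (Set.range fun k : Fin (iv j) =>
        (X ⟨j, k⟩ : MvPolynomial ((j : Fin n) × Fin (iv j)) K))) ^ (a j) =
      Ideal.span ((fun e => (monomial e (1 : K))) '' Fset s a) := by
  classical
  induction s using Finset.induction_on with
  | empty =>
    rw [Finset.prod_empty]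
    have hF : Fset (iv := iv) (∅ : Finset (Fin n)) a = {0} := by
      ext e
      simp only [Fset, Set.mem_setOf_eq, Set.mem_singleton_iff]
      constructor
      · rintro ⟨hs, -⟩
        have hsup : e.support = ∅ :=
          Finset.eq_empty_of_forall_notMem fun p hps => by simpa using hs p hps
        exact Finsupp.support_eq_empty.mp hsup
      · rintro rfl
        exact ⟨fun p hp => by simp at hp, fun j hj => by simp at hj⟩
    rw [hF, Set.image_singleton]
    have : (monomial (0 : ((j : Fin n) × Fin (iv j)) →₀ ℕ) (1 : K)) = 1 := by
      rw [monomial_zero']; exact C_1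
    rw [this, Ideal.span_singleton_one, Ideal.one_eq_top]
  | @insert j s hj ih =>
    rw [Finset.prod_insert hj, pow_span, ih, span_mon_mul, Fset_step hj]

end Sigma2

section Mem

variable {n : ℕ} {iv : Fin n → ℕ}

lemma expIdeal_eq_span (A : Set (Fin n → ℕ)) :
    expIdeal K iv A =
      Ideal.span ((fun e => (monomial e (1 : K))) '' ⋃ a ∈ A, Fset Finset.univ a) := by
  rw [expIdeal, Set.image_iUnion₂, Ideal.span_iUnion]
  refine iSup_congr fun a => ?_
  rw [Ideal.span_iUnion]
  exact iSup_congr fun _ => prod_span a Finset.univ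

lemma mem_expIdeal {A : Set (Fin n → ℕ)} {f : MvPolynomial ((j : Fin n) × Fin (iv j)) K} :
    f ∈ expIdeal K iv A ↔ ∀ m ∈ f.support, ∃ a ∈ A, ∀ j, a j ≤ bdeg m j := by
  rw [expIdeal_eq_span, mem_span_mon]
  refine forall₂_congr fun m hm => ?_
  constructor
  · rintro ⟨u, hu, hle⟩
    simp only [Set.mem_iUnion] at hu
    obtain ⟨a, ha, hu⟩ := hu
    exact ⟨a, ha, fun j => (hu.2 j (Finset.mem_univ j)) ▸ bdeg_mono hle j⟩
  · rintro ⟨a, ha, hle⟩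
    have hch : ∀ j : Fin n, ∃ t : Fin (iv j) → ℕ,
        (∀ k, t k ≤ m ⟨j, k⟩) ∧ ∑ k, t k = a j := fun j =>
      exists_le_sum (fun k => m ⟨j, k⟩) Finset.univ (a j) (hle j)
    choose t ht1 ht2 using hch
    refine ⟨Finsupp.equivFunOnFinite.symm fun p => t p.1 p.2, ?_, ?_⟩
    · simp only [Set.mem_iUnion]
      refine ⟨a, ha, fun p _ => Finset.mem_univ _, fun j _ => ?_⟩
      have : ∀ k : Fin (iv j),
          (Finsupp.equivFunOnFinite.symm fun p : (j : Fin n) × Fin (iv j) =>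
            t p.1 p.2) ⟨j, k⟩ = t j k := fun k => rfl
      rw [bdeg, Finset.sum_congr rfl fun k _ => this k]
      exact ht2 j
    · rw [Finsupp.le_def]
      intro p
      exact ht1 p.1 p.2

lemma monIdeal_eq_span (A : Set (Fin n → ℕ)) :
    monIdeal K A = Ideal.span
      ((fun e => (monomial e (1 : K))) '' (Finsupp.equivFunOnFinite.symm '' A)) := by
  rw [monIdeal, ← Set.image_comp]
  congr 1
  refine Set.image_congr fun a _ => ?_
  show ∏ j, (X j : MvPolynomial (Fin n) K) ^ a j = monomial (Finsupp.equivFunOnFinite.symm a) 1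
  rw [monomial_eq, C_1, one_mul, Finsupp.prod_pow]
  rfl

lemma mem_monIdeal {A : Set (Fin n → ℕ)} {f : MvPolynomial (Fin n) K} :
    f ∈ monIdeal K A ↔ ∀ m ∈ f.support, ∃ a ∈ A, ∀ j, a j ≤ m j := by
  rw [monIdeal_eq_span, mem_span_mon]
  refine forall₂_congr fun m hm => ?_
  constructor
  · rintro ⟨u, ⟨a, ha, rfl⟩, hle⟩
    exact ⟨a, ha, fun j => Finsupp.le_def.mp hle j⟩
  · rintro ⟨a, ha, hle⟩
    exact ⟨_, ⟨a, ha, rfl⟩, Finsupp.le_def.mpr hle⟩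

end Mem


section Good

variable {n : ℕ} {iv : Fin n → ℕ}

/-- `good Q b` iff the monomial `x^b` lies in the monomial ideal generated by `Q`. -/
def good (Q : Set (Fin n → ℕ)) (b : Fin n → ℕ) : Prop := ∃ a ∈ Q, ∀ j, a j ≤ b j

lemma good_mono {Q : Set (Fin n → ℕ)} {b b' : Fin n → ℕ} (h : good Q b)
    (hle : ∀ j, b j ≤ b' j) : good Q b' := by
  obtain ⟨a, ha, h1⟩ := h
  exact ⟨a, ha, fun j => le_trans (h1 j) (hle j)⟩

lemma mon_mem_monIdeal {Q : Set (Fin n → ℕ)} (b : Fin n → ℕ) :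
    (monomial (Finsupp.equivFunOnFinite.symm b) (1 : K) ∈ monIdeal K Q) ↔ good Q b := by
  classical
  rw [mem_monIdeal]
  rw [support_monomial, if_neg (one_ne_zero : (1 : K) ≠ 0)]
  constructor
  · intro h
    exact h _ (Finset.mem_singleton_self _)
  · intro h m hm
    rw [Finset.mem_singleton] at hm
    subst hm
    exact h

lemma mem_expQ {Q : Set (Fin n → ℕ)} {f : MvPolynomial ((j : Fin n) × Fin (iv j)) K} :
    f ∈ expIdeal K iv Q ↔ ∀ m ∈ f.support, good Q fun j => bdeg m j :=
  mem_expIdeal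

lemma mem_expP {V : Set (Fin n)} {f : MvPolynomial ((j : Fin n) × Fin (iv j)) K} :
    f ∈ expIdeal K iv ((fun j => Pi.single j 1) '' V) ↔
      ∀ m ∈ f.support, ∃ j ∈ V, 1 ≤ bdeg m j := by
  rw [mem_expIdeal]
  refine forall₂_congr fun m hm => ⟨?_, ?_⟩
  · rintro ⟨a, ⟨j₀, hj₀, rfl⟩, hle⟩
    refine ⟨j₀, hj₀, ?_⟩
    have := hle j₀
    simpa using this
  · rintro ⟨j₀, hj₀, h1⟩
    refine ⟨Pi.single j₀ 1, ⟨j₀, hj₀, rfl⟩, fun j => ?_⟩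
    rcases eq_or_ne j j₀ with rfl | hne
    · rwa [Pi.single_eq_same]
    · rw [Pi.single_eq_of_ne hne]
      exact Nat.zero_le _

lemma not_mem_expP {V : Set (Fin n)} {f : MvPolynomial ((j : Fin n) × Fin (iv j)) K} :
    f ∉ expIdeal K iv ((fun j => Pi.single j 1) '' V) ↔
      ∃ m ∈ f.support, ∀ j ∈ V, bdeg m j = 0 := by
  rw [mem_expP]
  push_neg
  refine exists_congr fun m => and_congr_right fun _ => ?_
  constructor
  · intro h j hj
    have := h j hj
    omega
  · intro h j hj
    have := h j hj
    omega

/-- indicator weight of the variable blocks in `V` -/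
def wV {iv : Fin n → ℕ} (V : Set (Fin n)) [DecidablePred (· ∈ V)] :
    ((j : Fin n) × Fin (iv j)) → ℕ := fun p => if p.1 ∈ V then 1 else 0

lemma wdeg_indicator_zero_iff (V : Set (Fin n)) [DecidablePred (· ∈ V)]
    (m : ((j : Fin n) × Fin (iv j)) →₀ ℕ) :
    wdeg (wV V) m = 0 ↔ ∀ j ∈ V, bdeg m j = 0 := by
  rw [wdeg, Finset.sum_eq_zero_iff]
  show (∀ p ∈ Finset.univ, (if p.1 ∈ V then 1 else 0) * m p = 0) ↔ _
  constructor
  · intro h j hj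
    refine bdeg_eq_zero_of m j fun k => ?_
    have := h ⟨j, k⟩ (Finset.mem_univ _)
    rw [if_pos hj, one_mul] at this
    exact this
  · intro h p _
    by_cases hp : p.1 ∈ V
    · rw [if_pos hp, one_mul]
      have h2 := h p.1 hp
      rw [bdeg, Finset.sum_eq_zero_iff] at h2
      exact h2 p.2 (Finset.mem_univ _)
    · rw [if_neg hp, zero_mul]

lemma key_mul {V : Set (Fin n)} [DecidablePred (· ∈ V)] {Q : Set (Fin n → ℕ)}
    (hrestrict : ∀ b : Fin n → ℕ, good Q b → good Q fun j => if j ∈ V then b j else 0)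
    {f g : MvPolynomial ((j : Fin n) × Fin (iv j)) K}
    (hf : f ≠ 0) (hfbad : ∀ m ∈ f.support, ¬ good Q fun j => bdeg m j)
    (hg : ∃ m ∈ g.support, ∀ j ∈ V, bdeg m j = 0) :
    f * g ∉ expIdeal K iv Q := by
  intro hmem
  obtain ⟨e, he, hemin⟩ := exists_Phi_min (wV V) f hf
  have hgne : g ≠ 0 := by
    rintro rfl
    obtain ⟨m, hm, -⟩ := hg
    simp at hm
  obtain ⟨d, hd, hdmin⟩ := exists_Phi_min (wV V) g hgne
  obtain ⟨m0, hm0, hm0z⟩ := hg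
  have hdz : ∀ j ∈ V, bdeg d j = 0 := by
    rw [← wdeg_indicator_zero_iff V d]
    have h1 : wdeg (wV V) d ≤ wdeg (wV V) m0 := wdeg_le_of_Phi_le (hdmin m0 hm0)
    have h2 : wdeg (wV V) m0 = 0 := (wdeg_indicator_zero_iff V m0).mpr hm0z
    omega
  have hin : e + d ∈ (f * g).support := mem_support_mul_min he hd hemin hdmin
  have hgood : good Q fun j => bdeg (e + d) j := mem_expQ.mp hmem _ hin
  have h2 := hrestrict _ hgood
  refine hfbad e he (good_mono h2 fun j => ?_)
  by_cases hj : j ∈ V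
  · rw [if_pos hj, bdeg_add, hdz j hj, add_zero]
  · rw [if_neg hj]
    exact Nat.zero_le _

lemma mul_not_mem_expP {V : Set (Fin n)} [DecidablePred (· ∈ V)]
    {f g : MvPolynomial ((j : Fin n) × Fin (iv j)) K}
    (hf : f ∉ expIdeal K iv ((fun j => Pi.single j 1) '' V))
    (hg : g ∉ expIdeal K iv ((fun j => Pi.single j 1) '' V)) :
    f * g ∉ expIdeal K iv ((fun j => Pi.single j 1) '' V) := by
  have hfne : f ≠ 0 := by rintro rfl; exact hf (Submodule.zero_mem _)
  have hgne : g ≠ 0 := by rintro rfl; exact hg (Submodule.zero_mem _)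
  obtain ⟨e, he, hemin⟩ := exists_Phi_min (wV V) f hfne
  obtain ⟨d, hd, hdmin⟩ := exists_Phi_min (wV V) g hgne
  obtain ⟨mf, hmf, hmfz⟩ := not_mem_expP.mp hf
  obtain ⟨mg, hmg, hmgz⟩ := not_mem_expP.mp hg
  have hez : wdeg (wV V) e = 0 := by
    have h1 : wdeg (wV V) e ≤ wdeg (wV V) mf := wdeg_le_of_Phi_le (hemin mf hmf)
    have h2 : wdeg (wV V) mf = 0 := (wdeg_indicator_zero_iff V mf).mpr hmfz
    omega
  have hdz : wdeg (wV V) d = 0 := by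
    have h1 : wdeg (wV V) d ≤ wdeg (wV V) mg := wdeg_le_of_Phi_le (hdmin mg hmg)
    have h2 : wdeg (wV V) mg = 0 := (wdeg_indicator_zero_iff V mg).mpr hmgz
    omega
  have hin : e + d ∈ (f * g).support := mem_support_mul_min he hd hemin hdmin
  refine not_mem_expP.mpr ⟨e + d, hin, ?_⟩
  rw [← wdeg_indicator_zero_iff V]
  rw [wdeg_add]
  omega

lemma pow_not_mem_expP {V : Set (Fin n)} [DecidablePred (· ∈ V)]
    {f : MvPolynomial ((j : Fin n) × Fin (iv j)) K}
    (hf : f ∉ expIdeal K iv ((fun j => Pi.single j 1) '' V)) (c : ℕ) :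
    f ^ (c + 1) ∉ expIdeal K iv ((fun j => Pi.single j 1) '' V) := by
  induction c with
  | zero => rwa [pow_one]
  | succ c ih =>
    rw [pow_succ]
    exact mul_not_mem_expP ih hf

end Good

end ExpPrimAux

/-- Lemma 1.1(vii): if the monomial ideal `Q` is `P`-primary for the monomial prime
`P = (x_j : j ∈ V)`, then `Q^*` is `P^*`-primary, where
`P^* = (x_{jk} : j ∈ V, 1 ≤ k ≤ i_j)` is the expansion of `P`. -/
theorem expIdeal_isPrimary (K : Type*) [Field K] {n : ℕ} (iv : Fin n → ℕ)
    (hiv : ∀ j, 0 < iv j) (Q : Set (Fin n → ℕ)) (V : Set (Fin n))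
    (hprimary : (monIdeal K Q).IsPrimary)
    (hrad : (monIdeal K Q).radical = monIdeal K ((fun j => Pi.single j 1) '' V)) :
    (expIdeal K iv Q).IsPrimary ∧
      (expIdeal K iv Q).radical = expIdeal K iv ((fun j => Pi.single j 1) '' V) := by
  classical
  open ExpPrimAux in
  have hprim := Ideal.isPrimary_iff.mp hprimary
  have hQne : monIdeal K Q ≠ ⊤ := hprim.1
  -- basic facts about `Q`
  have hQle : ∀ b : Fin n → ℕ, ExpPrimAux.good Q b → ∃ j ∈ V, 1 ≤ b j := by
    intro b hb
    have h1 : (monomial (Finsupp.equivFunOnFinite.symm b) (1 : K) : MvPolynomial (Fin n) K) ∈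
        monIdeal K Q := (ExpPrimAux.mon_mem_monIdeal b).mpr hb
    have h2 := Ideal.le_radical h1
    rw [hrad, ExpPrimAux.mem_monIdeal] at h2
    have h3 := h2 (Finsupp.equivFunOnFinite.symm b) (by
      rw [support_monomial, if_neg (one_ne_zero : (1 : K) ≠ 0)]
      exact Finset.mem_singleton_self _)
    obtain ⟨a, ⟨j₀, hj₀, rfl⟩, hle⟩ := h3
    refine ⟨j₀, hj₀, ?_⟩
    have := hle j₀
    simpa using this
  have hpure : ∀ j₀ ∈ V, ∃ c, ExpPrimAux.good Q (Pi.single j₀ c) := by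
    intro j₀ hj₀
    have hX : (X j₀ : MvPolynomial (Fin n) K) ∈ monIdeal K ((fun j => Pi.single j 1) '' V) := by
      rw [ExpPrimAux.mem_monIdeal]
      intro m hm
      rw [support_X, Finset.mem_singleton] at hm
      subst hm
      refine ⟨Pi.single j₀ 1, ⟨j₀, hj₀, rfl⟩, fun j => ?_⟩
      rcases eq_or_ne j j₀ with rfl | hne
      · simp [Finsupp.single_apply]
      · simp [Pi.single_eq_of_ne hne]
    rw [← hrad] at hX
    obtain ⟨c, hc⟩ := Ideal.mem_radical_iff.mp hX
    rw [X_pow_eq_monomial] at hc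
    rw [ExpPrimAux.mem_monIdeal] at hc
    have h3 := hc (Finsupp.single j₀ c) (by
      rw [support_monomial, if_neg (one_ne_zero : (1 : K) ≠ 0)]
      exact Finset.mem_singleton_self _)
    obtain ⟨a, ha, hle⟩ := h3
    refine ⟨c, a, ha, fun j => ?_⟩
    have := hle j
    rcases eq_or_ne j j₀ with rfl | hne
    · simpa [Finsupp.single_apply] using this
    · simpa [Finsupp.single_apply, Pi.single_eq_of_ne hne, (Ne.symm hne : j₀ ≠ j)] using this
  have hrestrict : ∀ b : Fin n → ℕ, ExpPrimAux.good Q b →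
      ExpPrimAux.good Q fun j => if j ∈ V then b j else 0 := by
    intro b hb
    have hsplit : Finsupp.equivFunOnFinite.symm b =
        Finsupp.equivFunOnFinite.symm (fun j => if j ∈ V then b j else 0) +
          Finsupp.equivFunOnFinite.symm (fun j => if j ∈ V then 0 else b j) := by
      ext j
      show b j = (if j ∈ V then b j else 0) + (if j ∈ V then 0 else b j)
      split <;> simp
    have h1 : (monomial (Finsupp.equivFunOnFinite.symm b) (1 : K) : MvPolynomial (Fin n) K) ∈
        monIdeal K Q := (ExpPrimAux.mon_mem_monIdeal b).mpr hb
    rw [hsplit, ← one_mul (1 : K), ← monomial_mul] at h1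
    rcases hprim.2 h1 with h2 | h2
    · exact (ExpPrimAux.mon_mem_monIdeal _).mp h2
    · exfalso
      rw [hrad, ExpPrimAux.mem_monIdeal] at h2
      have h3 := h2 _ (by
        rw [support_monomial, if_neg (one_ne_zero : (1 : K) ≠ 0)]
        exact Finset.mem_singleton_self _)
      obtain ⟨a, ⟨j₀, hj₀, rfl⟩, hle⟩ := h3
      have := hle j₀
      simp [hj₀] at this
  -- the expanded ideals
  have hQP : expIdeal K iv Q ≤ expIdeal K iv ((fun j => Pi.single j 1) '' V) := by
    intro f hf
    rw [ExpPrimAux.mem_expP]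
    intro m hm
    exact hQle _ (ExpPrimAux.mem_expQ.mp hf m hm)
  have honeP : (1 : MvPolynomial ((j : Fin n) × Fin (iv j)) K) ∉
      expIdeal K iv ((fun j => Pi.single j 1) '' V) := by
    intro h
    rw [ExpPrimAux.mem_expP] at h
    have h0 : (0 : ((j : Fin n) × Fin (iv j)) →₀ ℕ) ∈
        (1 : MvPolynomial ((j : Fin n) × Fin (iv j)) K).support := by
      have : (1 : MvPolynomial ((j : Fin n) × Fin (iv j)) K) =
          monomial 0 1 := by rw [monomial_zero']; exact C_1.symm
      rw [this, support_monomial, if_neg (one_ne_zero : (1 : K) ≠ 0)]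
      exact Finset.mem_singleton_self _
    obtain ⟨j, -, hj⟩ := h 0 h0
    simp [ExpPrimAux.bdeg] at hj
  -- radical computation
  have hradstar : (expIdeal K iv Q).radical = expIdeal K iv ((fun j => Pi.single j 1) '' V) := by
    apply le_antisymm
    · -- radical Q* ≤ P*
      intro f hf
      obtain ⟨c, hc⟩ := Ideal.mem_radical_iff.mp hf
      by_contra hfP
      rcases c with _ | c
      · rw [pow_zero] at hc
        exact honeP (hQP hc)
      · exact ExpPrimAux.pow_not_mem_expP hfP c (hQP hc)
    · -- P* ≤ radical Q*
      rw [ExpPrimAux.expIdeal_eq_span]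
      rw [Ideal.span_le]
      rintro x ⟨u, hu, rfl⟩
      simp only [Set.mem_iUnion] at hu
      obtain ⟨a, ha, huF⟩ := hu
      obtain ⟨j₀, hj₀, rfl⟩ := ha
      obtain ⟨c, hc⟩ := hpure j₀ hj₀
      refine Ideal.mem_radical_iff.mpr ⟨c, ?_⟩
      show (monomial u (1 : K)) ^ c ∈ expIdeal K iv Q
      rw [monomial_pow, one_pow]
      rw [ExpPrimAux.mem_expQ]
      intro m hm
      rw [support_monomial, if_neg (one_ne_zero : (1 : K) ≠ 0), Finset.mem_singleton] at hm
      subst hm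
      refine ExpPrimAux.good_mono hc fun j => ?_
      rw [ExpPrimAux.bdeg_smul]
      have hbu := huF.2 j (Finset.mem_univ j)
      simp only at hbu
      rw [hbu]
      rcases eq_or_ne j j₀ with rfl | hne
      · simp
      · simp [Pi.single_eq_of_ne hne]
  refine ⟨?_, hradstar⟩
  rw [Ideal.isPrimary_iff]
  constructor
  · intro h
    exact honeP (hQP (h ▸ Submodule.mem_top))
  · intro x y hxy
    by_cases hy : y ∈ (expIdeal K iv Q).radical
    · exact Or.inr hy
    left
    rw [hradstar] at hy
    obtain ⟨m0, hm0, hm0z⟩ := ExpPrimAux.not_mem_expP.mp hy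
    -- split x into good and bad parts
    set xg : MvPolynomial ((j : Fin n) × Fin (iv j)) K :=
      ∑ m ∈ x.support.filter (fun m => ExpPrimAux.good Q fun j => ExpPrimAux.bdeg m j),
        monomial m (coeff m x) with hxg
    have hxgcoeff : ∀ u, coeff u xg =
        if u ∈ x.support.filter (fun m => ExpPrimAux.good Q fun j => ExpPrimAux.bdeg m j)
          then coeff u x else 0 := by
      intro u
      rw [hxg, coeff_sum]
      rw [Finset.sum_congr rfl fun m _ => coeff_monomial u m (coeff m x)]
      exact Finset.sum_ite_eq' _ u (fun m => coeff m x)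
    have hxgmem : xg ∈ expIdeal K iv Q := by
      rw [ExpPrimAux.mem_expQ]
      intro m hm
      have hne : coeff m xg ≠ 0 := MvPolynomial.mem_support_iff.mp hm
      rw [hxgcoeff m] at hne
      by_cases hmem : m ∈ x.support.filter (fun m => ExpPrimAux.good Q fun j =>
          ExpPrimAux.bdeg m j)
      · exact (Finset.mem_filter.mp hmem).2
      · rw [if_neg hmem] at hne; exact absurd rfl hne
    by_cases hzero : x - xg = 0
    · rw [sub_eq_zero] at hzero
      rw [hzero]
      exact hxgmem
    · exfalso
      have hbad : ∀ m ∈ (x - xg).support, ¬ ExpPrimAux.good Q fun j => ExpPrimAux.bdeg m j := by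
        intro m hm hgood
        have hne : coeff m (x - xg) ≠ 0 := MvPolynomial.mem_support_iff.mp hm
        rw [coeff_sub, hxgcoeff m] at hne
        by_cases hin : m ∈ x.support
        · rw [if_pos (Finset.mem_filter.mpr ⟨hin, hgood⟩)] at hne
          exact hne (sub_self _)
        · have h0 : coeff m x = 0 := MvPolynomial.notMem_support_iff.mp hin
          simp [h0] at hne
      have hmul : (x - xg) * y ∈ expIdeal K iv Q := by
        have : (x - xg) * y = x * y - xg * y := by ring
        rw [this]
        exact Submodule.sub_mem _ hxy (Ideal.mul_mem_right _ _ hxgmem)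
      exact ExpPrimAux.key_mul hrestrict hzero hbad ⟨m0, hm0, hm0z⟩ hmul
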